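/- Let 0 < α < 1/2, let θ*_A be a unit vector in ℝ², let s ∈ {−1, 1}, and define θ'_D = s · R θ*_A and θ'_A = (√(1 − 2α) · θ*_A − α s · R θ*_A)/(1 − α). Then ‖θ'_A‖ = 1, ‖θ'_D‖ = 1, α θ'_D + (1 − α) θ'_A = √(1 − 2α) · θ*_A, and consequently θ_C(θ'_A, θ'_D) = θ*_A. -/
import Mathlib


open Real

/-- The aggregate vector `(α θ_D + (1−α) θ_A)/‖α θ_D + (1−α) θ_A‖`. -/
noncomputable def aggregate (α : ℝ) (θA θD : EuclideanSpace ℝ (Fin 2)) :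
    EuclideanSpace ℝ (Fin 2) :=
  (‖α • θD + (1 - α) • θA‖)⁻¹ • (α • θD + (1 - α) • θA)

/-- Rotation by `π/2`: `R(x, y) = (−y, x)`. -/
noncomputable def Rot (x : EuclideanSpace ℝ (Fin 2)) : EuclideanSpace ℝ (Fin 2) :=
  (WithLp.equiv 2 (Fin 2 → ℝ)).symm ![-(x 1), x 0]

lemma norm_Rot (x : EuclideanSpace ℝ (Fin 2)) : ‖Rot x‖ = ‖x‖ := by
  simp [Rot, EuclideanSpace.norm_eq, Fin.sum_univ_two]
  ring_nf

lemma inner_Rot (x : EuclideanSpace ℝ (Fin 2)) : @inner ℝ _ _ x (Rot x) = 0 := by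
  simp [Rot, PiLp.inner_apply, Fin.sum_univ_two]
  ring

lemma norm_comb (x : EuclideanSpace ℝ (Fin 2)) (hx : ‖x‖ = 1) (a b : ℝ) :
    ‖a • x + b • Rot x‖ ^ 2 = a ^ 2 + b ^ 2 := by
  rw [norm_add_sq_real]
  have h : @inner ℝ _ _ (a • x) (b • Rot x) = 0 := by
    rw [inner_smul_left, inner_smul_right, inner_Rot]; ring
  rw [h, norm_smul, norm_smul, norm_Rot, hx]
  simp [abs_mul_abs_self, mul_pow, sq_abs]

/-- Appendix G verification: the explicit equilibrium strategies are unit vectors, their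
weighted sum is `√(1 − 2α) θ*_A`, and the resulting aggregate equals `θ*_A`. -/
theorem stmt_15 (α : ℝ) (hα : 0 < α) (hα' : α < 1 / 2)
    (θAstar : EuclideanSpace ℝ (Fin 2)) (hAs : ‖θAstar‖ = 1)
    (s : ℝ) (hs : s = -1 ∨ s = 1) :
    ‖(1 - α)⁻¹ • (Real.sqrt (1 - 2 * α) • θAstar - (α * s) • Rot θAstar)‖ = 1 ∧
    ‖s • Rot θAstar‖ = 1 ∧
    α • (s • Rot θAstar) +
        (1 - α) • ((1 - α)⁻¹ • (Real.sqrt (1 - 2 * α) • θAstar - (α * s) • Rot θAstar)) =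
      Real.sqrt (1 - 2 * α) • θAstar ∧
    aggregate α
        ((1 - α)⁻¹ • (Real.sqrt (1 - 2 * α) • θAstar - (α * s) • Rot θAstar))
        (s • Rot θAstar) = θAstar := by
  have hs2 : s ^ 2 = 1 := by rcases hs with h | h <;> simp [h]
  have h2α : (0:ℝ) < 1 - 2 * α := by linarith
  have hsq : Real.sqrt (1 - 2 * α) ^ 2 = 1 - 2 * α := Real.sq_sqrt h2α.le
  have h1α : (0:ℝ) < 1 - α := by linarith
  set c := Real.sqrt (1 - 2 * α)
  have hA : ‖(1 - α)⁻¹ • (c • θAstar - (α * s) • Rot θAstar)‖ = 1 := by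
    have he : (1 - α)⁻¹ • (c • θAstar - (α * s) • Rot θAstar) =
        ((1 - α)⁻¹ * c) • θAstar + (-((1 - α)⁻¹ * (α * s))) • Rot θAstar := by
      rw [smul_sub, smul_smul, smul_smul, neg_smul]
      abel
    have h2 := norm_comb θAstar hAs ((1 - α)⁻¹ * c) (-((1 - α)⁻¹ * (α * s)))
    rw [← he] at h2
    have hval : ((1 - α)⁻¹ * c) ^ 2 + (-((1 - α)⁻¹ * (α * s))) ^ 2 = 1 := by
      field_simp
      nlinarith [hsq, hs2]
    rw [hval] at h2
    nlinarith [norm_nonneg ((1 - α)⁻¹ • (c • θAstar - (α * s) • Rot θAstar))]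
  have hD : ‖s • Rot θAstar‖ = 1 := by
    rw [norm_smul, norm_Rot, hAs]
    rcases hs with h | h <;> simp [h]
  have hsum : α • (s • Rot θAstar) +
      (1 - α) • ((1 - α)⁻¹ • (c • θAstar - (α * s) • Rot θAstar)) = c • θAstar := by
    rw [smul_smul, smul_smul, mul_inv_cancel₀ h1α.ne', one_smul, ← smul_smul]
    abel
  refine ⟨hA, hD, hsum, ?_⟩
  rw [aggregate, hsum, norm_smul, hAs, mul_one, Real.norm_eq_abs,
    abs_of_pos (Real.sqrt_pos.mpr h2α), smul_smul,
    inv_mul_cancel₀ (Real.sqrt_pos.mpr h2α).ne', one_smul]
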